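/- Let α > 0, a > 0, b > 0, β > 0 and let r be a nonnegative integer. Then the r-th moment of the OGE-LFR distribution is finite, i.e., the integral ∫₀^∞ x^r · α β (a + b x) exp(a x + (b/2) x²) exp(-α(exp(a x + (b/2) x²) - 1)) (1 - exp(-α(exp(a x + (b/2) x²) - 1)))^{β - 1} dx converges to a finite value. -/

import Mathlib

open Real MeasureTheory Set Filter

/-- The OGE-LFR probability density function. -/
noncomputable def ogeLfrPdf (α a b β x : ℝ) : ℝ :=
  α * β * (a + b * x) * Real.exp (a * x + b / 2 * x ^ 2) *
    Real.exp (-α * (Real.exp (a * x + b / 2 * x ^ 2) - 1)) *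
    (1 - Real.exp (-α * (Real.exp (a * x + b / 2 * x ^ 2) - 1))) ^ (β - 1)

namespace OgeLfrAux

variable {α a b β : ℝ}

/-- derivative of the "inner polynomial" g(x) = a x + b/2 x². -/
lemma hasDerivAt_g (a b x : ℝ) :
    HasDerivAt (fun x : ℝ => a * x + b / 2 * x ^ 2) (a + b * x) x := by
  have h1 : HasDerivAt (fun x : ℝ => a * x) a x := by
    simpa using (hasDerivAt_id x).const_mul a
  have h2 : HasDerivAt (fun x : ℝ => b / 2 * x ^ 2) (b / 2 * (2 * x)) x := by
    simpa using ((hasDerivAt_pow 2 x).const_mul (b / 2))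
  refine (h1.add h2).congr_deriv ?_; ring

/-- derivative of h(x) = 1 - exp(-α (e^{g x} - 1)). -/
lemma hasDerivAt_h (α a b : ℝ) (x : ℝ) :
    HasDerivAt (fun x : ℝ => 1 - Real.exp (-α * (Real.exp (a * x + b / 2 * x ^ 2) - 1)))
      (α * (a + b * x) * Real.exp (a * x + b / 2 * x ^ 2) *
        Real.exp (-α * (Real.exp (a * x + b / 2 * x ^ 2) - 1))) x := by
  have hg := hasDerivAt_g a b x
  have hE := (Real.hasDerivAt_exp _).comp x hg
  have hin : HasDerivAt (fun x : ℝ => -α * (Real.exp (a * x + b / 2 * x ^ 2) - 1))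
      (-α * (Real.exp (a * x + b / 2 * x ^ 2) * (a + b * x))) x :=
    (hE.sub_const 1).const_mul (-α)
  have h2 := ((Real.hasDerivAt_exp _).comp x hin).const_sub 1
  refine h2.congr_deriv ?_; ring

lemma g_nonneg (ha : 0 < a) (hb : 0 < b) {x : ℝ} (hx : 0 ≤ x) :
    0 ≤ a * x + b / 2 * x ^ 2 := by positivity

lemma h_pos (hα : 0 < α) (ha : 0 < a) (hb : 0 < b) {x : ℝ} (hx : 0 < x) :
    0 < 1 - Real.exp (-α * (Real.exp (a * x + b / 2 * x ^ 2) - 1)) := by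
  have hg : 0 < a * x + b / 2 * x ^ 2 := by positivity
  have hE : 1 < Real.exp (a * x + b / 2 * x ^ 2) := Real.one_lt_exp_iff.mpr hg
  have : -α * (Real.exp (a * x + b / 2 * x ^ 2) - 1) < 0 := by nlinarith
  have := Real.exp_lt_one_iff.mpr this
  linarith

lemma h_nonneg (hα : 0 < α) (ha : 0 < a) (hb : 0 < b) {x : ℝ} (hx : 0 ≤ x) :
    0 ≤ 1 - Real.exp (-α * (Real.exp (a * x + b / 2 * x ^ 2) - 1)) := by
  have hg : 0 ≤ a * x + b / 2 * x ^ 2 := g_nonneg ha hb hx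
  have hE : 1 ≤ Real.exp (a * x + b / 2 * x ^ 2) := by
    simpa using Real.exp_le_exp.mpr hg
  have h1 : -α * (Real.exp (a * x + b / 2 * x ^ 2) - 1) ≤ 0 := by nlinarith
  have := Real.exp_le_one_iff.mpr h1
  linarith

lemma h_le_one (x : ℝ) :
    1 - Real.exp (-α * (Real.exp (a * x + b / 2 * x ^ 2) - 1)) ≤ 1 := by
  have := Real.exp_pos (-α * (Real.exp (a * x + b / 2 * x ^ 2) - 1))
  linarith

lemma pdf_nonneg (hα : 0 < α) (ha : 0 < a) (hb : 0 < b) (hβ : 0 < β) {x : ℝ} (hx : 0 ≤ x) :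
    0 ≤ ogeLfrPdf α a b β x := by
  have h0 := h_nonneg (α := α) hα ha hb hx
  unfold ogeLfrPdf
  have hr : (0:ℝ) ≤ (1 - Real.exp (-α * (Real.exp (a * x + b / 2 * x ^ 2) - 1))) ^ (β - 1) :=
    Real.rpow_nonneg h0 _
  have hbx : 0 ≤ a + b * x := by nlinarith
  positivity

/-- The cdf F(x) = h(x)^β is an antiderivative of the pdf on (0,∞). -/
lemma hasDerivAt_F (hα : 0 < α) (ha : 0 < a) (hb : 0 < b) (hβ : 0 < β) {x : ℝ} (hx : 0 < x) :
    HasDerivAt (fun x : ℝ =>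
        (1 - Real.exp (-α * (Real.exp (a * x + b / 2 * x ^ 2) - 1))) ^ β)
      (ogeLfrPdf α a b β x) x := by
  have hne : (1 - Real.exp (-α * (Real.exp (a * x + b / 2 * x ^ 2) - 1))) ≠ 0 :=
    (h_pos hα ha hb hx).ne'
  have hrpow := Real.hasDerivAt_rpow_const (x := 1 - Real.exp (-α * (Real.exp (a * x + b / 2 * x ^ 2) - 1))) (p := β) (Or.inl hne)
  have := hrpow.comp x (hasDerivAt_h α a b x)
  refine this.congr_deriv ?_
  unfold ogeLfrPdf
  ring

lemma continuous_F (hβ : 0 < β) :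
    Continuous (fun x : ℝ =>
      (1 - Real.exp (-α * (Real.exp (a * x + b / 2 * x ^ 2) - 1))) ^ β) := by
  have hcont : Continuous (fun x : ℝ =>
      1 - Real.exp (-α * (Real.exp (a * x + b / 2 * x ^ 2) - 1))) := by continuity
  exact hcont.rpow_const fun x => Or.inr hβ.le

lemma continuousAt_pdf (hα : 0 < α) (ha : 0 < a) (hb : 0 < b) {x : ℝ} (hx : 0 < x) (r : ℕ) :
    ContinuousAt (fun x : ℝ => x ^ r * ogeLfrPdf α a b β x) x := by
  have hcont : Continuous (fun x : ℝ =>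
      1 - Real.exp (-α * (Real.exp (a * x + b / 2 * x ^ 2) - 1))) := by continuity
  have hr : ContinuousAt (fun x : ℝ =>
      (1 - Real.exp (-α * (Real.exp (a * x + b / 2 * x ^ 2) - 1))) ^ (β - 1)) x :=
    hcont.continuousAt.rpow_const (Or.inl (h_pos hα ha hb hx).ne')
  unfold ogeLfrPdf
  fun_prop


/-- Antiderivative for the tail comparison function. -/
lemma hasDerivAt_G (hα : 0 < α) (x : ℝ) :
    HasDerivAt (fun x : ℝ => -(2 / α) * Real.exp (-(α / 2) * (Real.exp (a * x + b / 2 * x ^ 2) - 1)))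
      ((a + b * x) * Real.exp (a * x + b / 2 * x ^ 2) *
        Real.exp (-(α / 2) * (Real.exp (a * x + b / 2 * x ^ 2) - 1))) x := by
  have hg := hasDerivAt_g a b x
  have hE := (Real.hasDerivAt_exp _).comp x hg
  have hin : HasDerivAt (fun x : ℝ => -(α / 2) * (Real.exp (a * x + b / 2 * x ^ 2) - 1))
      (-(α / 2) * (Real.exp (a * x + b / 2 * x ^ 2) * (a + b * x))) x :=
    (hE.sub_const 1).const_mul (-(α / 2))
  have h2 := ((Real.hasDerivAt_exp _).comp x hin).const_mul (-(2 / α))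
  refine h2.congr_deriv ?_
  field_simp

lemma tendsto_G (hα : 0 < α) (ha : 0 < a) (hb : 0 < b) :
    Tendsto (fun x : ℝ => -(2 / α) * Real.exp (-(α / 2) * (Real.exp (a * x + b / 2 * x ^ 2) - 1)))
      atTop (nhds 0) := by
  have hg_top : Tendsto (fun x : ℝ => a * x + b / 2 * x ^ 2) atTop atTop := by
    apply tendsto_atTop_mono (fun x => ?_) (Filter.Tendsto.const_mul_atTop ha tendsto_id)
    simp only [id]
    nlinarith [sq_nonneg x]
  have hE_top : Tendsto (fun x : ℝ => Real.exp (a * x + b / 2 * x ^ 2)) atTop atTop :=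
    Real.tendsto_exp_atTop.comp hg_top
  have hI : Tendsto (fun x : ℝ => -(α / 2) * (Real.exp (a * x + b / 2 * x ^ 2) - 1)) atTop atBot := by
    apply Filter.Tendsto.const_mul_atTop_of_neg (by linarith : -(α / 2) < 0)
    exact tendsto_atTop_add_const_right _ (-1) hE_top |>.congr (fun x => by ring)
  have := (Real.tendsto_exp_atBot.comp hI).const_mul (-(2 / α))
  simpa using this

end OgeLfrAux

/-- For every nonnegative integer r, the r-th moment of the OGE-LFR
distribution is finite, i.e. `x ↦ x^r · f(x)` is integrable on (0, ∞). -/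
theorem ogeLfr_moment_finite (α a b β : ℝ) (hα : 0 < α) (ha : 0 < a) (hb : 0 < b)
    (hβ : 0 < β) (r : ℕ) :
    MeasureTheory.IntegrableOn (fun x : ℝ => x ^ r * ogeLfrPdf α a b β x)
      (Set.Ioi (0 : ℝ)) := by
  open OgeLfrAux in
  have hcontOn : ∀ s : Set ℝ, s ⊆ Set.Ioi 0 →
      ContinuousOn (fun x : ℝ => x ^ r * ogeLfrPdf α a b β x) s := by
    intro s hs x hx
    exact (OgeLfrAux.continuousAt_pdf hα ha hb (hs hx) r).continuousWithinAt
  -- Part A : integrability on (0,1]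
  have hA : MeasureTheory.IntegrableOn (fun x : ℝ => x ^ r * ogeLfrPdf α a b β x)
      (Set.Ioc (0:ℝ) 1) := by
    have hpdfInt : MeasureTheory.IntegrableOn (fun x => ogeLfrPdf α a b β x)
        (Set.Ioc (0:ℝ) 1) := by
      apply intervalIntegral.integrableOn_deriv_of_nonneg
        ((OgeLfrAux.continuous_F hβ).continuousOn)
        (fun x hx => OgeLfrAux.hasDerivAt_F hα ha hb hβ hx.1)
        (fun x hx => OgeLfrAux.pdf_nonneg hα ha hb hβ hx.1.le)
    refine hpdfInt.mono' ((hcontOn _ Set.Ioc_subset_Ioi_self).aestronglyMeasurable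
      measurableSet_Ioc) ?_
    rw [MeasureTheory.ae_restrict_iff' measurableSet_Ioc]
    filter_upwards with x hx
    have h0 := OgeLfrAux.pdf_nonneg (β := β) hα ha hb hβ hx.1.le
    have hxr : x ^ r ≤ 1 := pow_le_one₀ hx.1.le hx.2
    have hxr0 : (0:ℝ) ≤ x ^ r := pow_nonneg hx.1.le r
    rw [Real.norm_eq_abs, abs_of_nonneg (mul_nonneg hxr0 h0)]
    simpa using mul_le_mul_of_nonneg_right hxr h0
  -- Part B : integrability on (1, ∞)
  have hB : MeasureTheory.IntegrableOn (fun x : ℝ => x ^ r * ogeLfrPdf α a b β x)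
      (Set.Ioi (1:ℝ)) := by
    set C : ℝ := (1 - Real.exp (-α * (Real.exp (a * 1 + b / 2 * 1 ^ 2) - 1)))⁻¹ with hC_def
    have hC_pos : 0 < C := by
      have := OgeLfrAux.h_pos (α := α) (a := a) (b := b) hα ha hb (one_pos)
      rw [hC_def]
      exact inv_pos.mpr this
    set M : ℝ := (r.factorial : ℝ) * Real.exp (1 / (α * b)) with hM_def
    have hM_pos : 0 < M := by
      have hf : (0:ℝ) < r.factorial := by exact_mod_cast r.factorial_pos
      rw [hM_def]; positivity
    have hφ : MeasureTheory.IntegrableOn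
        (fun x : ℝ => (a + b * x) * Real.exp (a * x + b / 2 * x ^ 2) *
          Real.exp (-(α / 2) * (Real.exp (a * x + b / 2 * x ^ 2) - 1))) (Set.Ioi (1:ℝ)) := by
      apply MeasureTheory.integrableOn_Ioi_deriv_of_nonneg'
        (fun x _ => OgeLfrAux.hasDerivAt_G hα x)
        (fun x hx => ?_) (OgeLfrAux.tendsto_G hα ha hb)
      have hx0 : (0:ℝ) < x := lt_trans one_pos hx
      have : 0 < a + b * x := by nlinarith
      positivity
    refine ((hφ.const_mul (α * β * C * M)).mono'
      ((hcontOn _ (Set.Ioi_subset_Ioi zero_le_one)).aestronglyMeasurable measurableSet_Ioi) ?_)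
    rw [MeasureTheory.ae_restrict_iff' measurableSet_Ioi]
    filter_upwards with x hx
    rw [Set.mem_Ioi] at hx
    have hx0 : (0:ℝ) < x := lt_trans one_pos hx
    set E : ℝ := Real.exp (a * x + b / 2 * x ^ 2) with hE_def
    have hgx : (0:ℝ) < a * x + b / 2 * x ^ 2 := by positivity
    have hE1 : 1 < E := Real.one_lt_exp_iff.mpr hgx
    have hh_pos : 0 < 1 - Real.exp (-α * (E - 1)) := OgeLfrAux.h_pos hα ha hb hx0
    have hh1_pos : 0 < 1 - Real.exp (-α * (Real.exp (a * 1 + b / 2 * 1 ^ 2) - 1)) :=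
      OgeLfrAux.h_pos hα ha hb one_pos
    -- key1 : rpow bound
    have hg_mono : a * 1 + b / 2 * 1 ^ 2 ≤ a * x + b / 2 * x ^ 2 := by
      have h1 : 0 ≤ a * (x - 1) := mul_nonneg ha.le (by linarith)
      have h2 : 0 ≤ b * (x ^ 2 - 1) := mul_nonneg hb.le (by nlinarith)
      nlinarith
    have hh_mono : 1 - Real.exp (-α * (Real.exp (a * 1 + b / 2 * 1 ^ 2) - 1))
        ≤ 1 - Real.exp (-α * (E - 1)) := by
      have hEE : Real.exp (a * 1 + b / 2 * 1 ^ 2) ≤ E := Real.exp_le_exp.mpr hg_mono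
      have : -α * (E - 1) ≤ -α * (Real.exp (a * 1 + b / 2 * 1 ^ 2) - 1) := by nlinarith
      have := Real.exp_le_exp.mpr this
      linarith
    have key1 : (1 - Real.exp (-α * (E - 1))) ^ (β - 1) ≤ C := by
      have e1 : (1 - Real.exp (-α * (E - 1))) ^ (β - 1)
          = (1 - Real.exp (-α * (E - 1))) ^ β * (1 - Real.exp (-α * (E - 1)))⁻¹ := by
        rw [show β - 1 = β + (-1) from by ring, Real.rpow_add hh_pos,
          Real.rpow_neg_one]
      rw [e1]
      have h2 : (1 - Real.exp (-α * (E - 1))) ^ β ≤ 1 :=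
        Real.rpow_le_one hh_pos.le (OgeLfrAux.h_le_one x) hβ.le
      have h3 : (1 - Real.exp (-α * (E - 1)))⁻¹ ≤ C := by
        rw [hC_def]
        exact inv_anti₀ hh1_pos hh_mono
      calc (1 - Real.exp (-α * (E - 1))) ^ β * (1 - Real.exp (-α * (E - 1)))⁻¹
          ≤ 1 * (1 - Real.exp (-α * (E - 1)))⁻¹ := by
            apply mul_le_mul_of_nonneg_right h2 (by positivity)
        _ ≤ C := by rw [one_mul]; exact h3
    -- key2 : gaussian-type bound
    have key2 : x ^ r * Real.exp (-α * (E - 1))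
        ≤ M * Real.exp (-(α / 2) * (E - 1)) := by
      have hu : a * x + b / 2 * x ^ 2 ≤ E - 1 := by
        have := Real.add_one_le_exp (a * x + b / 2 * x ^ 2); rw [← hE_def] at this; linarith
      have hgq : b / 2 * x ^ 2 ≤ a * x + b / 2 * x ^ 2 := by nlinarith
      have hxr : x ^ r ≤ (r.factorial : ℝ) * Real.exp x := by
        have h5 := Real.pow_div_factorial_le_exp x hx0.le r
        have hf : (0:ℝ) < r.factorial := by exact_mod_cast r.factorial_pos
        rw [div_le_iff₀ hf] at h5
        linarith
      have hsplit : Real.exp (-α * (E - 1))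
          = Real.exp (-(α / 2) * (E - 1)) * Real.exp (-(α / 2) * (E - 1)) := by
        rw [← Real.exp_add]; ring_nf
      have hstep : x - α / 2 * (E - 1) ≤ 1 / (α * b) := by
        have h4 : α / 2 * (b / 2 * x ^ 2) ≤ α / 2 * (E - 1) :=
          mul_le_mul_of_nonneg_left (le_trans hgq hu) (by positivity)
        have h7 : x - α / 2 * (b / 2 * x ^ 2) ≤ 1 / (α * b) := by
          rw [le_div_iff₀ (by positivity)]
          nlinarith [sq_nonneg (α * b * x / 2 - 1)]
        linarith
      calc x ^ r * Real.exp (-α * (E - 1))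
          = (x ^ r * Real.exp (-(α / 2) * (E - 1))) * Real.exp (-(α / 2) * (E - 1)) := by
            rw [hsplit]; ring
        _ ≤ ((r.factorial : ℝ) * Real.exp x * Real.exp (-(α / 2) * (E - 1)))
              * Real.exp (-(α / 2) * (E - 1)) := by
            apply mul_le_mul_of_nonneg_right _ (Real.exp_pos _).le
            exact mul_le_mul_of_nonneg_right hxr (Real.exp_pos _).le
        _ = (r.factorial : ℝ) * Real.exp (x - α / 2 * (E - 1)) * Real.exp (-(α / 2) * (E - 1)) := by
            rw [mul_assoc ((r.factorial : ℝ)), ← Real.exp_add]; ring_nf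
        _ ≤ (r.factorial : ℝ) * Real.exp (1 / (α * b)) * Real.exp (-(α / 2) * (E - 1)) := by
            apply mul_le_mul_of_nonneg_right _ (Real.exp_pos _).le
            exact mul_le_mul_of_nonneg_left (Real.exp_le_exp.mpr hstep) (by positivity)
        _ = M * Real.exp (-(α / 2) * (E - 1)) := by rw [hM_def]
    -- assemble
    have habx : (0:ℝ) < a + b * x := add_pos ha (mul_pos hb hx0)
    have hnn : 0 ≤ x ^ r * ogeLfrPdf α a b β x :=
      mul_nonneg (pow_nonneg hx0.le r) (OgeLfrAux.pdf_nonneg (β := β) hα ha hb hβ hx0.le)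
    rw [Real.norm_eq_abs, abs_of_nonneg hnn]
    have expand : x ^ r * ogeLfrPdf α a b β x
        = (α * β) * ((a + b * x) * E) * (x ^ r * Real.exp (-α * (E - 1)))
            * (1 - Real.exp (-α * (E - 1))) ^ (β - 1) := by
      unfold ogeLfrPdf
      rw [← hE_def]
      ring
    rw [expand]
    calc (α * β) * ((a + b * x) * E) * (x ^ r * Real.exp (-α * (E - 1)))
            * (1 - Real.exp (-α * (E - 1))) ^ (β - 1)
        ≤ (α * β) * ((a + b * x) * E) * (M * Real.exp (-(α / 2) * (E - 1))) * C := by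
          apply mul_le_mul
          · apply mul_le_mul_of_nonneg_left key2 (by positivity)
          · exact key1
          · exact Real.rpow_nonneg hh_pos.le _
          · positivity
      _ = α * β * C * M * ((a + b * x) * Real.exp (a * x + b / 2 * x ^ 2)
            * Real.exp (-(α / 2) * (Real.exp (a * x + b / 2 * x ^ 2) - 1))) := by
          rw [← hE_def]; ring
  -- combine
  have hsplit : Set.Ioc (0:ℝ) 1 ∪ Set.Ioi 1 = Set.Ioi (0:ℝ) :=
    Set.Ioc_union_Ioi_eq_Ioi zero_le_one
  rw [← hsplit]
  exact hA.union hB
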